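/- The quartic polynomial −det of the symmetric 4×4 matrix [[z₁₁, z₁₂, −u₋, u₊],[z₁₂, z₂₂, −v₋, v₊],[−u₋, −v₋, −2x₋, h],[u₊, v₊, h, 2x₊]] is annihilated by the derivation of the polynomial ring in the ten variables h, x₋, x₊, u±, v±, z₁₁, z₁₂, z₂₂ defined by X₋: h ↦ 2x₋, x₊ ↦ −h, u₊ ↦ u₋, v₊ ↦ v₋, all other variables ↦ 0. -/

import Mathlib

open MvPolynomial Matrix

set_option maxHeartbeats 2000000 in
/-- The coadjoint derivation of `x₋` in `g₄` annihilates the quartic Casimir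
`−det [[z₁₁, z₁₂, −u₋, u₊],[z₁₂, z₂₂, −v₋, v₊],[−u₋, −v₋, −2x₋, h],[u₊, v₊, h, 2x₊]]`.
Variables of `K[h, x₋, x₊, u₋, u₊, v₋, v₊, z₁₁, z₁₂, z₂₂]` are `X 0, …, X 9` in this
order; the derivation sends `h ↦ 2x₋`, `x₊ ↦ −h`, `u₊ ↦ u₋`, `v₊ ↦ v₋` and every other
variable to `0`. -/
theorem stmt_18 {K : Type*} [Field K] [CharZero K]
    (D : Derivation K (MvPolynomial (Fin 10) K) (MvPolynomial (Fin 10) K))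
    (h0 : D (X 0) = 2 * X 1) (h1 : D (X 1) = 0) (h2 : D (X 2) = -X 0)
    (h3 : D (X 3) = 0) (h4 : D (X 4) = X 3)
    (h5 : D (X 5) = 0) (h6 : D (X 6) = X 5)
    (h7 : D (X 7) = 0) (h8 : D (X 8) = 0) (h9 : D (X 9) = 0) :
    D (-Matrix.det !![X 7, X 8, -X 3, X 4;
                      X 8, X 9, -X 5, X 6;
                      -X 3, -X 5, -(2 * X 1), X 0;
                      X 4, X 6, X 0, 2 * X 2]) = 0 := by
  have hdet : Matrix.det !![(X 7 : MvPolynomial (Fin 10) K), X 8, -X 3, X 4;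
                      X 8, X 9, -X 5, X 6;
                      -X 3, -X 5, -(2 * X 1), X 0;
                      X 4, X 6, X 0, 2 * X 2] =
      X 7 * (X 9 * (-(2*X 1)*(2*X 2) - X 0*X 0) - (-X 5)*((-X 5)*(2*X 2) - X 0*X 6)
          + X 6*((-X 5)*X 0 - (-(2*X 1))*X 6))
      - X 8 * (X 8 * (-(2*X 1)*(2*X 2) - X 0*X 0) - (-X 5)*((-X 3)*(2*X 2) - X 0*X 4)
          + X 6*((-X 3)*X 0 - (-(2*X 1))*X 4))
      + (-X 3) * (X 8 * ((-X 5)*(2*X 2) - X 0*X 6) - X 9*((-X 3)*(2*X 2) - X 0*X 4)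
          + X 6*((-X 3)*X 6 - (-X 5)*X 4))
      - X 4 * (X 8 * ((-X 5)*X 0 - (-(2*X 1))*X 6) - X 9*((-X 3)*X 0 - (-(2*X 1))*X 4)
          + (-X 5)*((-X 3)*X 6 - (-X 5)*X 4)) := by
    simp [Matrix.det_succ_row_zero, Fin.sum_univ_succ, Fin.succAbove]
    ring
  rw [hdet]
  simp only [map_neg, map_add, map_sub, Derivation.leibniz, h0, h1, h2, h3, h4, h5, h6, h7, h8, h9,
    smul_eq_mul, neg_eq_zero]
  have hD2 : D 2 = 0 := by rw [show ((2:MvPolynomial (Fin 10) K)) = ((2:ℕ):MvPolynomial (Fin 10) K) by norm_num, Derivation.map_natCast]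
  rw [hD2]
  ring
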